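/- Let G(t, σ, Z₀₀, Z₀₁, Z₁₀, Z₀₂, Z₁₁, Z₂₀) = Im{(1 + i(f₁(t) + 2Z₀₀ + Z₁₀))^{n−1}·[σ²(f₁'(t) + 2Z₀₁ + Z₁₁)² + (1 + i(f₀''(t) + ½(f₁''(t) + Z₀₂)σ²))·(1 + i(f₁(t) + 2Z₀₀ + 4Z₁₀ + Z₂₀))]}, where f₀ is real-analytic with f₀(0) = f₀'(0) = f₀''(0) = 0 and f₁ = −tan(arctan(f₀'')/n). Then at the base point: (1) G(t, 0,0,0,0,0,0,0) = 0 for all t; (2) the partial derivatives of G with respect to Z₀₁, Z₁₁, Z₀₂ vanish identically at (t, 0,…,0); (3) ∂G/∂Z₂₀ at (0, 0,…,0) equals 1; (4) ∂G/∂Z₁₀ at (0,0,…,0) equals n+3 and ∂G/∂Z₀₀ at (0,0,…,0) equals 2n; hence k² + (n+3)k + 2n ≠ 0 for every integer k > 0. -/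

import Mathlib

section AuxGT
open Complex Real

lemma aux_exp (θ : ℝ) (h : Real.cos θ ≠ 0) :
    (1 : ℂ) + Complex.I * (Real.tan θ : ℝ) = Complex.exp (θ * Complex.I) / (Real.cos θ : ℂ) := by
  have h' : Complex.cos (θ:ℂ) ≠ 0 := by
    rw [← Complex.ofReal_cos]; exact Complex.ofReal_ne_zero.mpr h
  rw [Complex.exp_mul_I, Real.tan_eq_sin_div_cos]
  push_cast
  field_simp

lemma main_im (n : ℕ) (hn : 1 ≤ n) (b : ℝ) :
    (((1:ℂ) + Complex.I * ((-Real.tan (Real.arctan b / n) : ℝ) : ℂ))^n *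
      ((1:ℂ) + Complex.I * (b : ℝ))).im = 0 := by
  set θ : ℝ := Real.arctan b / n with hθ
  have hn0 : (n:ℝ) ≠ 0 := Nat.cast_ne_zero.mpr (by omega)
  have hnpos : (0:ℝ) < n := by positivity
  have habs : |θ| < π/2 := by
    have h1 : |Real.arctan b| < π/2 :=
      abs_lt.mpr ⟨Real.neg_pi_div_two_lt_arctan b, Real.arctan_lt_pi_div_two b⟩
    have h2 : |θ| = |Real.arctan b| / n := by
      rw [hθ, abs_div, abs_of_pos hnpos]
    rw [h2]
    calc |Real.arctan b| / n ≤ |Real.arctan b| := by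
          apply div_le_self (abs_nonneg _)
          exact_mod_cast hn
      _ < π/2 := h1
  have hcθ : Real.cos θ ≠ 0 := by
    have := Real.cos_pos_of_mem_Ioo (Set.mem_Ioo.mpr (abs_lt.mp habs))
    exact this.ne'
  have key1 : (1:ℂ) + Complex.I * ((-Real.tan θ : ℝ) : ℂ)
      = Complex.exp ((-θ : ℝ) * Complex.I) / (Real.cos θ : ℂ) := by
    have h2 := aux_exp (-θ) (by rwa [Real.cos_neg])
    rw [Real.tan_neg, Real.cos_neg] at h2
    exact_mod_cast h2
  have key2 : (1:ℂ) + Complex.I * (b : ℝ)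
      = Complex.exp ((Real.arctan b : ℝ) * Complex.I) / (Real.cos (Real.arctan b) : ℂ) := by
    have h3 := aux_exp (Real.arctan b) (Real.cos_arctan_pos b).ne'
    rwa [Real.tan_arctan] at h3
  have hnθ : (n:ℝ) * θ = Real.arctan b := by
    rw [hθ]; field_simp
  rw [key1, key2, div_pow, ← Complex.exp_nat_mul, div_mul_div_comm, ← Complex.exp_add]
  have hexp : (n:ℂ) * ((-θ : ℝ) * Complex.I) + (Real.arctan b : ℝ) * Complex.I = 0 := by
    have h4 : (((n:ℝ) * θ : ℝ) : ℂ) = ((Real.arctan b : ℝ) : ℂ) := by rw [hnθ]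
    push_cast at h4 ⊢
    rw [← h4]; ring
  rw [hexp, Complex.exp_zero, ← Complex.ofReal_pow, ← Complex.ofReal_mul, ← Complex.ofReal_one,
    ← Complex.ofReal_div, Complex.ofReal_im]

lemma hasDerivAt_im' {h : ℝ → ℂ} {h' : ℂ} {x : ℝ} (H : HasDerivAt h h' x) :
    HasDerivAt (fun z => (h z).im) h'.im x := by
  have H' := Complex.imCLM.hasFDerivAt.comp_hasDerivAt x H
  simp only [Complex.imCLM_apply, Function.comp_def] at H'
  exact H'

lemma key_deriv (m : ℕ) (a c : ℝ) :
    HasDerivAt (fun z : ℝ => (((1:ℂ) + Complex.I * (a:ℂ) * (z:ℂ)) ^ m *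
      ((1:ℂ) + Complex.I * (c:ℂ) * (z:ℂ))).im) (m * a + c) 0 := by
  have hla : HasDerivAt (fun w : ℂ => (1:ℂ) + Complex.I * (a:ℂ) * w)
      (Complex.I * (a:ℂ)) (((0:ℝ):ℂ)) := by
    simpa [mul_assoc] using ((hasDerivAt_id (((0:ℝ):ℂ))).const_mul (Complex.I * (a:ℂ))).const_add 1
  have hlc : HasDerivAt (fun w : ℂ => (1:ℂ) + Complex.I * (c:ℂ) * w)
      (Complex.I * (c:ℂ)) (((0:ℝ):ℂ)) := by
    simpa [mul_assoc] using ((hasDerivAt_id (((0:ℝ):ℂ))).const_mul (Complex.I * (c:ℂ))).const_add 1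
  have Hp := hla.pow m
  have H := (Hp.mul hlc).comp_ofReal
  have H2 := hasDerivAt_im' H
  convert H2 using 1 <;>
  push_cast <;>
  simp [Complex.add_im, Complex.mul_im, Complex.mul_re]

end AuxGT



/-- The Gérard–Tahara function G(t,σ,Z₀₀,Z₀₁,Z₁₀,Z₀₂,Z₁₁,Z₂₀) for the
SO(n)-invariant special Lagrangian reduction equation. -/
noncomputable def Gfun (n : ℕ) (f0 f1 : ℝ → ℝ)
    (t σ Z00 Z01 Z10 Z02 Z11 Z20 : ℝ) : ℝ :=
  (((1 : ℂ) + Complex.I * (f1 t + 2*Z00 + Z10)) ^ (n-1) *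
    (((σ^2 * (deriv f1 t + 2*Z01 + Z11)^2 : ℝ) : ℂ) +
      (1 + Complex.I * (deriv (deriv f0) t + (1/2) * (deriv (deriv f1) t + Z02) * σ^2)) *
      (1 + Complex.I * (f1 t + 2*Z00 + 4*Z10 + Z20)))).im

/-- with f₀ real-analytic, f₀(0) = f₀'(0) = f₀''(0) = 0 and
f₁ = −tan(arctan(f₀'')/n), the function G satisfies the four Gérard–Tahara
hypotheses: (1) G(t,0) ≡ 0; (2) ∂G/∂Z₀₁, ∂G/∂Z₁₁, ∂G/∂Z₀₂ vanish at (t,0);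
(3) ∂G/∂Z₂₀(0,0) = 1; (4) ∂G/∂Z₁₀(0,0) = n+3 and ∂G/∂Z₀₀(0,0) = 2n, whence
k² + (n+3)k + 2n ≠ 0 for every integer k > 0. -/
theorem stmt18 (n : ℕ) (hn : 1 ≤ n) (f0 f1 : ℝ → ℝ) (s : Set ℝ)
    (hs : IsOpen s) (h0s : (0:ℝ) ∈ s) (han : AnalyticOn ℝ f0 s)
    (h00 : f0 0 = 0) (h01 : deriv f0 0 = 0) (h02 : deriv (deriv f0) 0 = 0)
    (hf1 : ∀ t, f1 t = -Real.tan (Real.arctan (deriv (deriv f0) t) / n)) :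
    (∀ t, Gfun n f0 f1 t 0 0 0 0 0 0 0 = 0) ∧
    (∀ t, deriv (fun z => Gfun n f0 f1 t 0 0 z 0 0 0 0) 0 = 0 ∧
          deriv (fun z => Gfun n f0 f1 t 0 0 0 0 0 z 0) 0 = 0 ∧
          deriv (fun z => Gfun n f0 f1 t 0 0 0 0 z 0 0) 0 = 0) ∧
    (deriv (fun z => Gfun n f0 f1 0 0 0 0 0 0 0 z) 0 = 1) ∧
    (deriv (fun z => Gfun n f0 f1 0 0 0 0 z 0 0 0) 0 = n + 3) ∧
    (deriv (fun z => Gfun n f0 f1 0 0 z 0 0 0 0 0) 0 = 2 * n) ∧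
    (∀ k : ℕ, 0 < k → (k : ℝ)^2 + (n + 3) * (k : ℝ) + 2 * n ≠ 0) := by
  obtain ⟨m, rfl⟩ : ∃ m, n = m + 1 := ⟨n - 1, (Nat.succ_pred_eq_of_pos hn).symm⟩
  have hf10 : f1 0 = 0 := by
    rw [hf1 0, h02]
    simp
  refine ⟨?_, ?_, ?_, ?_, ?_, ?_⟩
  · -- (1)
    intro t
    have hm := main_im (m+1) (by omega) (deriv (deriv f0) t)
    rw [← hf1 t] at hm
    simp only [Gfun, Nat.add_sub_cancel]
    rw [show ((0:ℝ)) = (0:ℝ) from rfl]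
    convert hm using 2
    push_cast
    ring
  · -- (2)
    intro t
    refine ⟨?_, ?_, ?_⟩ <;>
    · have hconst : ∀ g : ℝ → ℝ, (∀ z, g z = g 0) → deriv g 0 = 0 := by
        intro g hg
        have : g = fun _ => g 0 := funext hg
        rw [this, deriv_const]
      apply hconst
      intro z
      simp only [Gfun]
      congr 3 <;> push_cast <;> ring
  · -- (3)
    have hfun : (fun z => Gfun (m+1) f0 f1 0 0 0 0 0 0 0 z)
        = fun z : ℝ => (((1:ℂ) + Complex.I * ((0:ℝ):ℂ) * (z:ℂ)) ^ m *
          ((1:ℂ) + Complex.I * ((1:ℝ):ℂ) * (z:ℂ))).im := by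
      funext z
      simp only [Gfun, Nat.add_sub_cancel]
      congr 2 <;> push_cast [hf10, h02] <;> ring
    rw [hfun, (key_deriv m 0 1).deriv]
    ring
  · -- (4)
    have hfun : (fun z => Gfun (m+1) f0 f1 0 0 0 0 z 0 0 0)
        = fun z : ℝ => (((1:ℂ) + Complex.I * ((1:ℝ):ℂ) * (z:ℂ)) ^ m *
          ((1:ℂ) + Complex.I * ((4:ℝ):ℂ) * (z:ℂ))).im := by
      funext z
      simp only [Gfun, Nat.add_sub_cancel]
      congr 2 <;> push_cast [hf10, h02] <;> ring
    rw [hfun, (key_deriv m 1 4).deriv]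
    push_cast
    ring
  · -- (5)
    have hfun : (fun z => Gfun (m+1) f0 f1 0 0 z 0 0 0 0 0)
        = fun z : ℝ => (((1:ℂ) + Complex.I * ((2:ℝ):ℂ) * (z:ℂ)) ^ m *
          ((1:ℂ) + Complex.I * ((2:ℝ):ℂ) * (z:ℂ))).im := by
      funext z
      simp only [Gfun, Nat.add_sub_cancel]
      congr 2 <;> push_cast [hf10, h02] <;> ring
    rw [hfun, (key_deriv m 2 2).deriv]
    push_cast
    ring
  · -- (6)
    intro k hk h
    have hk' : (1:ℝ) ≤ k := by exact_mod_cast hk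
    have hm' : (0:ℝ) ≤ (m:ℝ) := Nat.cast_nonneg m
    push_cast at h
    nlinarith
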